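/- Assume h_p ≥ 0 and r_i ≥ r_{i+1} for i = 1,…,N−1. Let (p, Δ) : [0,∞) → ℝ^N × ℝ^N be differentiable and satisfy the autonomous (disturbance-free) closed-loop string dynamics ṗ(t) = −(B + h_p⟨B⟩)RBᵀ(M⁻¹p(t) − v₀𝟙) + B A Δ(t), Δ̇(t) = −Bᵀ(M⁻¹p(t) − v₀𝟙) for all t ≥ 0. Then the function t ↦ H(p(t), Δ(t)) is nonincreasing on [0,∞). -/

import Mathlib

open Matrix MeasureTheory Real

/-- The N×N matrix with 1 on the diagonal and -1 on the first superdiagonal. -/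
noncomputable def Bmat (N : ℕ) : Matrix (Fin N) (Fin N) ℝ :=
  Matrix.of fun i j => if j = i then 1 else if (j : ℕ) = (i : ℕ) + 1 then -1 else 0

/-- Entrywise absolute value of `Bmat N`. -/
noncomputable def absB (N : ℕ) : Matrix (Fin N) (Fin N) ℝ :=
  Matrix.of fun i j => |Bmat N i j|

/-- Euclidean norm of a vector in ℝ^N. -/
noncomputable def norm2 {N : ℕ} (x : Fin N → ℝ) : ℝ := Real.sqrt (x ⬝ᵥ x)

/-- The Hamiltonian H(p, Δ) = ½(p − v₀M𝟙)ᵀ M⁻¹ (p − v₀M𝟙) + ½ Δᵀ A Δ. -/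
noncomputable def Ham {N : ℕ} (v0 : ℝ) (m a : Fin N → ℝ) (p Δ : Fin N → ℝ) : ℝ :=
  (1/2) * ((p - v0 • (Matrix.diagonal m *ᵥ fun _ => 1)) ⬝ᵥ
      (Matrix.diagonal (fun i => (m i)⁻¹) *ᵥ (p - v0 • (Matrix.diagonal m *ᵥ fun _ => 1)))) +
  (1/2) * (Δ ⬝ᵥ (Matrix.diagonal a *ᵥ Δ))

/-- The "previous component" of a vector: `prevv v i = v (i-1)` for `i ≥ 1`, else `0`. -/
noncomputable def prevv {N : ℕ} (v : Fin N → ℝ) (i : Fin N) : ℝ :=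
  if _h : 0 < (i : ℕ) then v ⟨(i:ℕ) - 1, lt_of_le_of_lt (Nat.sub_le _ _) i.isLt⟩ else 0

lemma sum_comp {N : ℕ} (s : ℝ) (v : Fin N → ℝ) (i : Fin N) :
    (∑ j : Fin N, (if i = j then (1:ℝ) else if (i:ℕ) = (j:ℕ)+1 then s else 0) * v j)
      = v i + s * prevv v i := by
  rcases Nat.eq_zero_or_pos (i : ℕ) with h0 | h0
  · rw [Finset.sum_eq_single i]
    · simp [prevv, h0]
    · intro j _ hj
      have h1 : ¬ i = j := fun h => hj h.symm
      have h2 : ¬ (i:ℕ) = (j:ℕ)+1 := by omega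
      rw [if_neg h1, if_neg h2, zero_mul]
    · simp
  · set k : Fin N := ⟨(i:ℕ) - 1, lt_of_le_of_lt (Nat.sub_le _ _) i.isLt⟩ with hk
    have hki : k ≠ i := by
      intro h
      have := congrArg Fin.val h
      simp only [hk] at this; omega
    have hterm : ∀ j : Fin N,
        (if i = j then (1:ℝ) else if (i:ℕ) = (j:ℕ)+1 then s else 0) * v j
          = (if j = i then v j else 0) + (if j = k then s * v j else 0) := by
      intro j
      by_cases hji : j = i
      · subst hji
        rw [if_pos rfl, if_pos rfl, if_neg (fun h => hki h.symm)]
        ring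
      · rw [if_neg (fun h => hji h.symm), if_neg hji]
        by_cases hjk : j = k
        · have hc : (i:ℕ) = (j:ℕ)+1 := by
            subst hjk; simp only [hk]; omega
          rw [if_pos hc, if_pos hjk]; ring
        · have hc : ¬ (i:ℕ) = (j:ℕ)+1 := by
            intro h
            exact hjk (Fin.ext (by simp only [hk]; omega))
          rw [if_neg hc, if_neg hjk]; ring
    rw [Finset.sum_congr rfl (fun j _ => hterm j), Finset.sum_add_distrib,
      Finset.sum_ite_eq' Finset.univ i v, Finset.sum_ite_eq' Finset.univ k (fun j => s * v j)]
    simp [prevv, h0, hk]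

lemma BT_comp {N : ℕ} (v : Fin N → ℝ) (i : Fin N) :
    ((Bmat N)ᵀ *ᵥ v) i = v i - prevv v i := by
  have h := sum_comp (-1) v i
  simp only [Matrix.mulVec, Matrix.transpose_apply, dotProduct, Bmat, Matrix.of_apply]
  rw [h]; ring

lemma absB_entry {N : ℕ} (j i : Fin N) :
    absB N j i = if i = j then (1:ℝ) else if (i:ℕ) = (j:ℕ)+1 then 1 else 0 := by
  simp only [absB, Bmat, Matrix.of_apply]
  by_cases h1 : i = j
  · simp [h1]
  · by_cases h2 : (i:ℕ) = (j:ℕ)+1 <;> simp [h1, h2]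

lemma absBT_comp {N : ℕ} (v : Fin N → ℝ) (i : Fin N) :
    ((absB N)ᵀ *ᵥ v) i = v i + prevv v i := by
  have h := sum_comp 1 v i
  simp only [Matrix.mulVec, Matrix.transpose_apply, dotProduct]
  rw [Finset.sum_congr rfl (fun j _ => by rw [absB_entry j i]), h]; ring

lemma abel_identity (Rn V : ℕ → ℝ) (n : ℕ) :
    (∑ k ∈ Finset.range (n+1), Rn k * (V k^2 - (if k = 0 then 0 else V (k-1)^2)))
      = ∑ j ∈ Finset.range n, (Rn j - Rn (j+1)) * V j^2 + Rn n * V n^2 := by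
  induction n with
  | zero => simp
  | succ n ih =>
    rw [Finset.sum_range_succ, ih, Finset.sum_range_succ]
    norm_num
    ring

lemma abel_nonneg (N : ℕ) (hN : 1 ≤ N) (r : Fin N → ℝ) (hr : ∀ i, 0 < r i)
    (hrdec : ∀ i : Fin N, ∀ h : (i:ℕ)+1 < N, r ⟨(i:ℕ)+1,h⟩ ≤ r i) (v : Fin N → ℝ) :
    0 ≤ ∑ i : Fin N, r i * ((v i)^2 - (prevv v i)^2) := by
  set Rn : ℕ → ℝ := fun k => if h : k < N then r ⟨k,h⟩ else 0 with hRn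
  set V : ℕ → ℝ := fun k => if h : k < N then v ⟨k,h⟩ else 0 with hV
  have hterm : ∀ i : Fin N, r i * ((v i)^2 - (prevv v i)^2)
      = (fun k => Rn k * (V k^2 - (if k = 0 then 0 else V (k-1)^2))) (i : ℕ) := by
    intro i
    have h1 : Rn (i:ℕ) = r i := by simp [hRn, i.isLt]
    have h2 : V (i:ℕ) = v i := by simp [hV, i.isLt]
    have h3 : (prevv v i)^2 = if (i:ℕ) = 0 then 0 else V ((i:ℕ)-1)^2 := by
      rcases Nat.eq_zero_or_pos (i:ℕ) with h0 | h0
      · simp [prevv, h0]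
      · have hlt : (i:ℕ)-1 < N := lt_of_le_of_lt (Nat.sub_le _ _) i.isLt
        simp [prevv, h0, hV, hlt, Nat.pos_iff_ne_zero.mp h0]
    simp only [h1, h2, h3]
  rw [Finset.sum_congr rfl (fun i _ => hterm i),
    Fin.sum_univ_eq_sum_range (fun k => Rn k * (V k^2 - (if k = 0 then 0 else V (k-1)^2))) N]
  obtain ⟨n, rfl⟩ : ∃ n, N = n + 1 := ⟨N - 1, by omega⟩
  rw [abel_identity]
  have h1 : ∀ j ∈ Finset.range n, 0 ≤ (Rn j - Rn (j+1)) * V j^2 := by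
    intro j hj
    rw [Finset.mem_range] at hj
    apply mul_nonneg _ (sq_nonneg _)
    have hjN : j < n + 1 := by omega
    have hjN' : j + 1 < n + 1 := by omega
    have := hrdec ⟨j, hjN⟩ (by simpa using hjN')
    simp only [hRn, dif_pos hjN, dif_pos hjN']
    linarith [this]
  have h2 : 0 ≤ Rn n * V n ^2 := by
    apply mul_nonneg _ (sq_nonneg _)
    have hn : n < n + 1 := by omega
    simp only [hRn, dif_pos hn]
    exact (hr _).le
  have := Finset.sum_nonneg h1
  linarith

lemma key_nonneg (N : ℕ) (hN : 1 ≤ N) (hp : ℝ) (hhp : 0 ≤ hp) (r : Fin N → ℝ)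
    (hr : ∀ i, 0 < r i)
    (hrdec : ∀ i : Fin N, ∀ h : (i:ℕ)+1 < N, r ⟨(i:ℕ)+1,h⟩ ≤ r i)
    (v : Fin N → ℝ) :
    0 ≤ v ⬝ᵥ (((Bmat N + hp • absB N) * Matrix.diagonal r * (Bmat N)ᵀ) *ᵥ v) := by
  rw [← Matrix.mulVec_mulVec, ← Matrix.mulVec_mulVec, Matrix.dotProduct_mulVec,
    ← Matrix.mulVec_transpose, Matrix.transpose_add, Matrix.transpose_smul,
    Matrix.add_mulVec, Matrix.smul_mulVec]
  have hcomp : ∀ i : Fin N,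
      ((Bmat N)ᵀ *ᵥ v + hp • (absB N)ᵀ *ᵥ v) i * (Matrix.diagonal r *ᵥ ((Bmat N)ᵀ *ᵥ v)) i
        = r i * (v i - prevv v i)^2 + hp * (r i * ((v i)^2 - (prevv v i)^2)) := by
    intro i
    simp only [Pi.add_apply, Pi.smul_apply, smul_eq_mul, Matrix.mulVec_diagonal,
      BT_comp, absBT_comp]
    ring
  rw [dotProduct]
  rw [Finset.sum_congr rfl (fun i _ => hcomp i), Finset.sum_add_distrib, ← Finset.mul_sum]
  have hs1 : 0 ≤ ∑ i : Fin N, r i * (v i - prevv v i)^2 :=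
    Finset.sum_nonneg fun i _ => mul_nonneg (hr i).le (sq_nonneg _)
  have hs2 := abel_nonneg N hN r hr hrdec v
  nlinarith

lemma ham_sum {N : ℕ} (v0 : ℝ) (m a : Fin N → ℝ) (P D : Fin N → ℝ) :
    Ham v0 m a P D
      = ∑ i : Fin N, ((1/2) * (m i)⁻¹ * (P i - v0 * m i)^2 + (1/2) * a i * (D i)^2) := by
  simp only [Ham, dotProduct, Matrix.mulVec_diagonal, Pi.sub_apply, Pi.smul_apply,
    smul_eq_mul, mul_one, Finset.mul_sum]
  rw [← Finset.sum_add_distrib]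
  exact Finset.sum_congr rfl fun i _ => by ring

/-- for the autonomous SPSV/SPAV string with nonincreasing damping gains,
the Hamiltonian is nonincreasing along trajectories. -/
theorem stmt_1 (N : ℕ) (hN : 1 ≤ N) (hp : ℝ) (hhp : 0 ≤ hp) (v0 : ℝ)
    (r a m : Fin N → ℝ) (hr : ∀ i, 0 < r i) (ha : ∀ i, 0 < a i) (hm : ∀ i, 0 < m i)
    (hrdec : ∀ i : Fin N, ∀ h : (i : ℕ) + 1 < N, r ⟨(i : ℕ) + 1, h⟩ ≤ r i)
    (p Δ : ℝ → Fin N → ℝ)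
    (hdyn : ∀ t : ℝ, 0 ≤ t →
      HasDerivAt p
        (-(((Bmat N + hp • absB N) * Matrix.diagonal r * (Bmat N)ᵀ) *ᵥ
            (Matrix.diagonal (fun i => (m i)⁻¹) *ᵥ p t - v0 • (fun _ : Fin N => (1:ℝ))))
          + (Bmat N * Matrix.diagonal a) *ᵥ Δ t) t ∧
      HasDerivAt Δ
        (-((Bmat N)ᵀ *ᵥ (Matrix.diagonal (fun i => (m i)⁻¹) *ᵥ p t - v0 • (fun _ : Fin N => (1:ℝ))))) t) :
    AntitoneOn (fun t => Ham v0 m a (p t) (Δ t)) (Set.Ici (0 : ℝ)) := by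
  set K : Matrix (Fin N) (Fin N) ℝ :=
    (Bmat N + hp • absB N) * Matrix.diagonal r * (Bmat N)ᵀ with hK
  set w : ℝ → Fin N → ℝ :=
    fun t => Matrix.diagonal (fun i => (m i)⁻¹) *ᵥ p t - v0 • (fun _ : Fin N => (1:ℝ)) with hw
  have key : ∀ t ∈ Set.Ici (0:ℝ),
      HasDerivAt (fun t => Ham v0 m a (p t) (Δ t)) (-(w t ⬝ᵥ (K *ᵥ w t))) t := by
    intro t ht
    obtain ⟨hdp, hdΔ⟩ := hdyn t ht
    set P' : Fin N → ℝ := -(K *ᵥ w t) + (Bmat N * Matrix.diagonal a) *ᵥ Δ t with hP'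
    set D' : Fin N → ℝ := -((Bmat N)ᵀ *ᵥ w t) with hD'
    have hpi : ∀ i, HasDerivAt (fun t => p t i) (P' i) t := hasDerivAt_pi.mp hdp
    have hΔi : ∀ i, HasDerivAt (fun t => Δ t i) (D' i) t := hasDerivAt_pi.mp hdΔ
    have heq : (fun t => Ham v0 m a (p t) (Δ t))
        = fun t => ∑ i : Fin N,
            ((1/2) * (m i)⁻¹ * (p t i - v0 * m i)^2 + (1/2) * a i * (Δ t i)^2) :=
      funext fun t => ham_sum v0 m a (p t) (Δ t)
    rw [heq]
    have hterm : ∀ i : Fin N, HasDerivAt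
        (fun t => (1/2) * (m i)⁻¹ * (p t i - v0 * m i)^2 + (1/2) * a i * (Δ t i)^2)
        (w t i * P' i + a i * Δ t i * D' i) t := by
      intro i
      have h1 : HasDerivAt (fun t => (p t i - v0 * m i)^2)
          (2 * (p t i - v0 * m i) * P' i) t := by
        simpa using ((hpi i).sub_const (v0 * m i)).fun_pow 2
      have h2 : HasDerivAt (fun t => (Δ t i)^2) (2 * Δ t i * D' i) t := by
        simpa using (hΔi i).fun_pow 2
      have h3 := (h1.const_mul ((1/2) * (m i)⁻¹)).add (h2.const_mul ((1/2) * a i))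
      convert h3 using 1
      case e'_4 => rfl
      case e'_5 => rfl
      case e'_8 => rfl
      have hwi : w t i = (m i)⁻¹ * p t i - v0 := by
        simp [hw, Matrix.mulVec_diagonal]
      have hmi := (hm i).ne'
      rw [hwi]
      field_simp
    have hsum := HasDerivAt.sum (u := Finset.univ) (fun i (_ : i ∈ Finset.univ) => hterm i)
    convert hsum using 1
    case e'_4 => rfl
    case e'_5 => rfl
    case e'_8 => ext; simp
    have cancel : w t ⬝ᵥ ((Bmat N * Matrix.diagonal a) *ᵥ Δ t)
        = ∑ i : Fin N, a i * Δ t i * ((Bmat N)ᵀ *ᵥ w t) i := by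
      rw [← Matrix.mulVec_mulVec, Matrix.dotProduct_mulVec, ← Matrix.mulVec_transpose]
      simp only [dotProduct, Matrix.mulVec_diagonal]
      exact Finset.sum_congr rfl fun i _ => by ring
    have expand : ∑ i : Fin N, (w t i * P' i + a i * Δ t i * D' i)
        = -(w t ⬝ᵥ (K *ᵥ w t)) + (w t ⬝ᵥ ((Bmat N * Matrix.diagonal a) *ᵥ Δ t)
            - ∑ i : Fin N, a i * Δ t i * ((Bmat N)ᵀ *ᵥ w t) i) := by
      simp only [hP', hD', Pi.add_apply, Pi.neg_apply, dotProduct, mul_add, mul_neg, neg_mul,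
        Finset.sum_add_distrib, Finset.sum_neg_distrib]
      ring
    rw [expand, cancel]
    ring
  apply antitoneOn_of_deriv_nonpos (convex_Ici 0)
  · exact fun t ht => ((key t ht).continuousAt).continuousWithinAt
  · intro t ht
    rw [interior_Ici] at ht
    exact ((key t (Set.mem_Ici.mpr (le_of_lt ht))).differentiableAt).differentiableWithinAt
  · intro t ht
    rw [interior_Ici] at ht
    rw [(key t (Set.mem_Ici.mpr (le_of_lt ht))).deriv]
    exact neg_nonpos.mpr (key_nonneg N hN hp hhp r hr hrdec (w t))
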